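/- (Key lower bound for the second Picard iterate, estimate for J₁.) Let E := {ξ ∈ ℝ³ : 1/10 ≤ ξ₁ ≤ 1/5 and 1/2 ≤ |ξ| ≤ 1}. There exist a constant c > 0 and N₀ ∈ ℕ such that for every integer N ≥ N₀, every δ > 0, for t := 2^{−2N} and every ξ ∈ E, one has (2δ²/N) · (1 − ξ₁²/|ξ|²) · ξ₁ · ∑_{j=N}^{⌊3N/2⌋+1} 2^{2j} ∫₀^t e^{−(t−τ)|ξ|²} ∫_{ℝ³} e^{−τ(|ξ−η|² + |η|²)} · ( −(ξ₂ − η₂)η₂ / (|ξ − η| |η|) ) · χ_j^+(ξ − η) χ_j^−(η) dη dτ ≥ c δ². -/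

import Mathlib

set_option maxHeartbeats 2000000


open MeasureTheory ENNReal Real Filter
open scoped RealInnerProductSpace

noncomputable section

/-- Physical/frequency space ℝ³ with the Euclidean norm. -/
abbrev R3 := EuclideanSpace ℝ (Fin 3)

/-- Vector values ℂ⁶ = ℂ³ × ℂ³ (velocity and micro-rotation components). -/
abbrev C6 := (Fin 3 ⊕ Fin 3) → ℂ
/-- Indicator of the cube {|ξ₁| ≤ 1, |ξ₂ − 2^j| ≤ 1, |ξ₃| ≤ 1} (i.e. χ_j^+). -/
def chiP (j : ℕ) (ξ : R3) : ℝ :=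
  if |ξ 0| ≤ 1 ∧ |ξ 1 - 2 ^ j| ≤ 1 ∧ |ξ 2| ≤ 1 then 1 else 0
/-- Indicator of the cube {|ξ₁| ≤ 1, |ξ₂ + 2^j| ≤ 1, |ξ₃| ≤ 1} (i.e. χ_j^−). -/
def chiM (j : ℕ) (ξ : R3) : ℝ :=
  if |ξ 0| ≤ 1 ∧ |ξ 1 + 2 ^ j| ≤ 1 ∧ |ξ 2| ≤ 1 then 1 else 0

/-- The set E on which the lower bound holds. -/
def Eset : Set R3 :=
  {ξ : R3 | 1 / 10 ≤ ξ 0 ∧ ξ 0 ≤ 1 / 5 ∧ 1 / 2 ≤ ‖ξ‖ ∧ ‖ξ‖ ≤ 1}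

lemma norm_sq_eq3 (η : R3) : ‖η‖^2 = η 0^2 + η 1^2 + η 2^2 := by
  rw [EuclideanSpace.norm_eq, Real.sq_sqrt (by positivity)]
  simp [Fin.sum_univ_three]

lemma abs_coord_le (η : R3) (i : Fin 3) : |η i| ≤ ‖η‖ := by
  rw [EuclideanSpace.norm_eq, ← Real.sqrt_sq_eq_abs]
  apply Real.sqrt_le_sqrt
  simp_rw [Real.norm_eq_abs, sq_abs]
  exact Finset.single_le_sum (f := fun i => η i ^ 2) (fun _ _ => by positivity) (Finset.mem_univ i)

lemma sub_apply3 (ξ η : R3) (i : Fin 3) : (ξ - η) i = ξ i - η i := rfl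

def Box (a b : Fin 3 → ℝ) : Set R3 := {η : R3 | ∀ i, η i ∈ Set.Icc (a i) (b i)}

lemma box_eq_preimage (a b : Fin 3 → ℝ) :
    Box a b = (MeasurableEquiv.toLp 2 (Fin 3 → ℝ)).symm ⁻¹' (Set.univ.pi fun i => Set.Icc (a i) (b i)) := by
  ext η
  simp only [Box, Set.mem_preimage, Set.mem_pi, Set.mem_univ, forall_true_left, Set.mem_setOf_eq]
  exact Iff.rfl

lemma volume_box (a b : Fin 3 → ℝ) :
    volume (Box a b) = ∏ i, ENNReal.ofReal (b i - a i) := by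
  have h := (EuclideanSpace.volume_preserving_symm_measurableEquiv_toLp (Fin 3)).measure_preimage
    (s := Set.univ.pi fun i => Set.Icc (a i) (b i))
    (MeasurableSet.univ_pi (fun i => measurableSet_Icc)).nullMeasurableSet
  rw [box_eq_preimage, h, volume_pi_pi]
  simp [Real.volume_Icc]

lemma measurable_coord (i : Fin 3) : Measurable fun η : R3 => η i :=
  (measurable_pi_apply i).comp (MeasurableEquiv.toLp 2 (Fin 3 → ℝ)).symm.measurable

lemma measurableSet_box (a b : Fin 3 → ℝ) : MeasurableSet (Box a b) := by
  rw [Box, Set.setOf_forall]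
  exact MeasurableSet.iInter fun i => measurableSet_Icc.preimage (measurable_coord i)

-- chi basic facts
lemma chiP_nonneg (j : ℕ) (η : R3) : 0 ≤ chiP j η := by unfold chiP; split <;> norm_num
lemma chiM_nonneg (j : ℕ) (η : R3) : 0 ≤ chiM j η := by unfold chiM; split <;> norm_num
lemma chiP_le_one (j : ℕ) (η : R3) : chiP j η ≤ 1 := by unfold chiP; split <;> norm_num
lemma chiM_le_one (j : ℕ) (η : R3) : chiM j η ≤ 1 := by unfold chiM; split <;> norm_num

lemma measurable_chiP (j : ℕ) : Measurable (chiP j) := by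
  unfold chiP
  refine Measurable.ite ?_ measurable_const measurable_const
  refine MeasurableSet.inter ?_ (MeasurableSet.inter ?_ ?_)
  · exact measurableSet_le (measurable_coord 0).abs measurable_const
  · exact measurableSet_le ((measurable_coord 1).sub measurable_const).abs measurable_const
  · exact measurableSet_le (measurable_coord 2).abs measurable_const

lemma measurable_chiM (j : ℕ) : Measurable (chiM j) := by
  unfold chiM
  refine Measurable.ite ?_ measurable_const measurable_const
  refine MeasurableSet.inter ?_ (MeasurableSet.inter ?_ ?_)
  · exact measurableSet_le (measurable_coord 0).abs measurable_const
  · exact measurableSet_le ((measurable_coord 1).add measurable_const).abs measurable_const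
  · exact measurableSet_le (measurable_coord 2).abs measurable_const

-- the angular factor
lemma ffactor_abs_le (ξ η : R3) : |(-((ξ 1 - η 1) * η 1) / (‖ξ - η‖ * ‖η‖))| ≤ 1 := by
  rcases eq_or_ne (‖ξ - η‖ * ‖η‖) 0 with h | h
  · rw [h]; simp
  · have hpos : 0 < ‖ξ - η‖ * ‖η‖ := lt_of_le_of_ne (by positivity) (Ne.symm h)
    rw [abs_div, div_le_one (by rwa [abs_of_pos hpos])]
    rw [abs_of_pos hpos, abs_neg, abs_mul]
    have h1 : |ξ 1 - η 1| ≤ ‖ξ - η‖ := by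
      have := abs_coord_le (ξ - η) 1; rwa [sub_apply3] at this
    exact mul_le_mul h1 (abs_coord_le η 1) (abs_nonneg _) (norm_nonneg _)

lemma G_measurable (ξ : R3) (j : ℕ) :
    StronglyMeasurable fun p : ℝ × R3 =>
      Real.exp (-p.1 * (‖ξ - p.2‖ ^ 2 + ‖p.2‖ ^ 2)) *
        (-((ξ 1 - p.2 1) * p.2 1) / (‖ξ - p.2‖ * ‖p.2‖)) * chiP j (ξ - p.2) * chiM j p.2 := by
  apply Measurable.stronglyMeasurable
  have hsub : Measurable fun η : R3 => ξ - η := measurable_const.sub measurable_id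
  have hc1 : Continuous fun p : ℝ × R3 => Real.exp (-p.1 * (‖ξ - p.2‖ ^ 2 + ‖p.2‖ ^ 2)) := by
    fun_prop
  have hnum : Measurable fun η : R3 => -((ξ 1 - η 1) * η 1) := by
    apply Measurable.neg
    exact ((measurable_const.sub (measurable_coord 1)).mul (measurable_coord 1))
  have hden : Measurable fun η : R3 => ‖ξ - η‖ * ‖η‖ := by fun_prop
  exact (((hc1.measurable.mul ((hnum.div hden).comp measurable_snd)).mul
    (((measurable_chiP j).comp hsub).comp measurable_snd)).mul
    ((measurable_chiM j).comp measurable_snd))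

lemma G_measurable' (ξ : R3) (j : ℕ) (τ : ℝ) :
    Measurable fun η : R3 =>
      Real.exp (-τ * (‖ξ - η‖ ^ 2 + ‖η‖ ^ 2)) *
        (-((ξ 1 - η 1) * η 1) / (‖ξ - η‖ * ‖η‖)) * chiP j (ξ - η) * chiM j η := by
  have := (G_measurable ξ j).measurable.comp (f := fun η : R3 => (τ, η))
    (measurable_const.prodMk measurable_id)
  exact this
-- appended to t3 content for testing
def SMbox (j : ℕ) : Set R3 := Box ![(-1 : ℝ), -(2^j)-1, -1] ![1, -((2:ℝ)^j)+1, 1]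

lemma chiM_mem {j : ℕ} {η : R3} (h : |η 0| ≤ 1 ∧ |η 1 + 2 ^ j| ≤ 1 ∧ |η 2| ≤ 1) :
    η ∈ SMbox j := by
  obtain ⟨h0, h1, h2⟩ := h
  rw [abs_le] at h0 h1 h2
  intro i
  fin_cases i <;> simp <;> constructor <;> linarith [h0.1, h0.2, h1.1, h1.2, h2.1, h2.2]

lemma G_nonneg (ξ : R3) (j : ℕ) {τ : ℝ} (hτ : 0 ≤ τ) (η : R3) :
    0 ≤ Real.exp (-τ * (‖ξ - η‖ ^ 2 + ‖η‖ ^ 2)) *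
        (-((ξ 1 - η 1) * η 1) / (‖ξ - η‖ * ‖η‖)) * chiP j (ξ - η) * chiM j η := by
  by_cases hM : |η 0| ≤ 1 ∧ |η 1 + 2 ^ j| ≤ 1 ∧ |η 2| ≤ 1
  · by_cases hP : |(ξ - η) 0| ≤ 1 ∧ |(ξ - η) 1 - 2 ^ j| ≤ 1 ∧ |(ξ - η) 2| ≤ 1
    · have hP2 := hP.2.1
      rw [sub_apply3, abs_le] at hP2
      have hM2 := hM.2.1
      rw [abs_le] at hM2
      have hone : (1:ℝ) ≤ 2 ^ j := one_le_pow₀ one_le_two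
      have hnum : 0 ≤ -((ξ 1 - η 1) * η 1) := by nlinarith [hP2.1, hM2.2]
      have : 0 ≤ -((ξ 1 - η 1) * η 1) / (‖ξ - η‖ * ‖η‖) :=
        div_nonneg hnum (by positivity)
      have := chiP_nonneg j (ξ - η); have := chiM_nonneg j η
      positivity
    · have h0 : chiP j (ξ - η) = 0 := by rw [chiP, if_neg hP]
      rw [h0, mul_zero, zero_mul]
  · have h0 : chiM j η = 0 := by rw [chiM, if_neg hM]
    rw [h0, mul_zero]

lemma G_abs_le (ξ : R3) (j : ℕ) {τ : ℝ} (hτ : 0 ≤ τ) (η : R3) :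
    |Real.exp (-τ * (‖ξ - η‖ ^ 2 + ‖η‖ ^ 2)) *
        (-((ξ 1 - η 1) * η 1) / (‖ξ - η‖ * ‖η‖)) * chiP j (ξ - η) * chiM j η| ≤
      (SMbox j).indicator (fun _ => (1:ℝ)) η := by
  by_cases hM : |η 0| ≤ 1 ∧ |η 1 + 2 ^ j| ≤ 1 ∧ |η 2| ≤ 1
  · rw [Set.indicator_of_mem (chiM_mem hM)]
    have he : |Real.exp (-τ * (‖ξ - η‖ ^ 2 + ‖η‖ ^ 2))| ≤ 1 := by
      rw [abs_of_pos (Real.exp_pos _)]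
      apply Real.exp_le_one_iff.2
      have : 0 ≤ ‖ξ - η‖ ^ 2 + ‖η‖ ^ 2 := by positivity
      nlinarith
    have hf := ffactor_abs_le ξ η
    have hcP : |chiP j (ξ - η)| ≤ 1 := by
      rw [abs_of_nonneg (chiP_nonneg _ _)]; exact chiP_le_one _ _
    have hcM : |chiM j η| ≤ 1 := by
      rw [abs_of_nonneg (chiM_nonneg _ _)]; exact chiM_le_one _ _
    rw [abs_mul, abs_mul, abs_mul]
    exact mul_le_one₀ (mul_le_one₀ (mul_le_one₀ he (abs_nonneg _) hf) (abs_nonneg _) hcP)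
      (abs_nonneg _) hcM
  · simp only [chiM, if_neg hM, mul_zero, abs_zero]
    exact Set.indicator_nonneg (fun _ _ => zero_le_one) η

lemma volume_box_lt_top (a b : Fin 3 → ℝ) : volume (Box a b) < ⊤ := by
  rw [volume_box]
  exact ENNReal.prod_lt_top (fun i _ => ENNReal.ofReal_lt_top)

lemma integrable_ind_box (a b : Fin 3 → ℝ) (c : ℝ) :
    Integrable ((Box a b).indicator fun _ => c) := by
  refine (IntegrableOn.integrable_indicator ?_ (measurableSet_box a b))
  exact integrableOn_const (volume_box_lt_top a b).ne

lemma integrable_G (ξ : R3) (j : ℕ) {τ : ℝ} (hτ : 0 ≤ τ) :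
    Integrable (fun η : R3 =>
      Real.exp (-τ * (‖ξ - η‖ ^ 2 + ‖η‖ ^ 2)) *
        (-((ξ 1 - η 1) * η 1) / (‖ξ - η‖ * ‖η‖)) * chiP j (ξ - η) * chiM j η) := by
  refine Integrable.mono' (g := (SMbox j).indicator fun _ => (1:ℝ))
    (by unfold SMbox; exact integrable_ind_box _ _ 1)
    (G_measurable' ξ j τ).aestronglyMeasurable (Filter.Eventually.of_forall fun η => ?_)
  rw [Real.norm_eq_abs]
  exact G_abs_le ξ j hτ η

def Bbox (ξ : R3) (j : ℕ) : Set R3 :=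
  Box ![ξ 0/2 - 1/2, ξ 1/2 - 2^j - 1/2, ξ 2/2 - 1/2]
      ![ξ 0/2 + 1/2, ξ 1/2 - 2^j + 1/2, ξ 2/2 + 1/2]

lemma volume_Bbox (ξ : R3) (j : ℕ) : volume (Bbox ξ j) = 1 := by
  rw [Bbox, volume_box, Fin.prod_univ_three]
  norm_num [Matrix.cons_val_two, Matrix.tail_cons, Matrix.head_cons]

lemma eta_lower (ξ : R3) (hξ : ∀ i, |ξ i| ≤ 1) (j : ℕ) (hj : (4:ℝ) ≤ 2^j)
    {τ : ℝ} (hτ : 0 ≤ τ) :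
    Real.exp (-(8 * ((2:ℝ)^j)^2 * τ)) * (1/4) ≤
      ∫ η : R3, Real.exp (-τ * (‖ξ - η‖ ^ 2 + ‖η‖ ^ 2)) *
        (-((ξ 1 - η 1) * η 1) / (‖ξ - η‖ * ‖η‖)) * chiP j (ξ - η) * chiM j η := by
  have hξ0 := abs_le.1 (hξ 0); have hξ1 := abs_le.1 (hξ 1); have hξ2 := abs_le.1 (hξ 2)
  have hle : ∀ η : R3, (Bbox ξ j).indicator (fun _ => Real.exp (-(8 * ((2:ℝ)^j)^2 * τ)) * (1/4)) η ≤
      Real.exp (-τ * (‖ξ - η‖ ^ 2 + ‖η‖ ^ 2)) *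
        (-((ξ 1 - η 1) * η 1) / (‖ξ - η‖ * ‖η‖)) * chiP j (ξ - η) * chiM j η := by
    intro η
    by_cases hmem : η ∈ Bbox ξ j
    · rw [Set.indicator_of_mem hmem]
      have e0 : ξ 0/2 - 1/2 ≤ η 0 ∧ η 0 ≤ ξ 0/2 + 1/2 := by simpa using hmem 0
      have e1 : ξ 1/2 - 2^j - 1/2 ≤ η 1 ∧ η 1 ≤ ξ 1/2 - 2^j + 1/2 := by simpa using hmem 1
      have e2 : ξ 2/2 - 1/2 ≤ η 2 ∧ η 2 ≤ ξ 2/2 + 1/2 := by simpa using hmem 2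
      have hchiP : chiP j (ξ - η) = 1 := by
        rw [chiP, if_pos]
        refine ⟨?_, ?_, ?_⟩ <;> rw [sub_apply3, abs_le] <;>
          constructor <;> linarith [e0.1, e0.2, e1.1, e1.2, e2.1, e2.2]
      have hchiM : chiM j η = 1 := by
        rw [chiM, if_pos]
        refine ⟨?_, ?_, ?_⟩ <;> rw [abs_le] <;>
          constructor <;> linarith [e0.1, e0.2, e1.1, e1.2, e2.1, e2.2]
      -- norm bounds
      have c1 : (2:ℝ)^j - 1 ≤ ξ 1 - η 1 := by linarith [e1.2]
      have c1' : ξ 1 - η 1 ≤ 2^j + 1 := by linarith [e1.1]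
      have c2 : (2:ℝ)^j - 1 ≤ -η 1 := by linarith [e1.2]
      have c2' : -η 1 ≤ 2^j + 1 := by linarith [e1.1]
      have hnorm1 : (2:ℝ)^j - 1 ≤ ‖ξ - η‖ := by
        have h := abs_coord_le (ξ - η) 1
        rw [sub_apply3] at h
        exact le_trans (le_trans c1 (le_abs_self _)) h
      have hnorm2 : (2:ℝ)^j - 1 ≤ ‖η‖ := by
        have h := abs_coord_le η 1
        exact le_trans (le_trans c2 (neg_le_abs _)) h
      have hden_pos : 0 < ‖ξ - η‖ * ‖η‖ :=
        mul_pos (lt_of_lt_of_le (by linarith) hnorm1) (lt_of_lt_of_le (by linarith) hnorm2)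
      have s0 : (ξ 0 - η 0)^2 ≤ 1 := by nlinarith [e0.1, e0.2, hξ0.1, hξ0.2]
      have s2 : (ξ 2 - η 2)^2 ≤ 1 := by nlinarith [e2.1, e2.2, hξ2.1, hξ2.2]
      have s1 : (ξ 1 - η 1)^2 ≤ ((2:ℝ)^j + 1)^2 := by nlinarith [c1, c1', hj]
      have t0 : (η 0)^2 ≤ 1 := by nlinarith [e0.1, e0.2, hξ0.1, hξ0.2]
      have t2 : (η 2)^2 ≤ 1 := by nlinarith [e2.1, e2.2, hξ2.1, hξ2.2]
      have t1 : (η 1)^2 ≤ ((2:ℝ)^j + 1)^2 := by nlinarith [c2, c2', hj]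
      have hsq1 : ‖ξ - η‖^2 ≤ ((2:ℝ)^j + 2)^2 := by
        rw [norm_sq_eq3]
        simp only [sub_apply3]
        nlinarith [s0, s1, s2, hj]
      have hsq2 : ‖η‖^2 ≤ ((2:ℝ)^j + 2)^2 := by
        rw [norm_sq_eq3]
        nlinarith [t0, t1, t2, hj]
      have hub1 : ‖ξ - η‖ ≤ (2:ℝ)^j + 2 := by
        have h := Real.sqrt_le_sqrt hsq1
        rwa [Real.sqrt_sq (norm_nonneg _), Real.sqrt_sq (by linarith : (0:ℝ) ≤ (2:ℝ)^j + 2)] at h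
      have hub2 : ‖η‖ ≤ (2:ℝ)^j + 2 := by
        have h := Real.sqrt_le_sqrt hsq2
        rwa [Real.sqrt_sq (norm_nonneg _), Real.sqrt_sq (by linarith : (0:ℝ) ≤ (2:ℝ)^j + 2)] at h
      have hS : ‖ξ - η‖^2 + ‖η‖^2 ≤ 8 * ((2:ℝ)^j)^2 := by nlinarith [hsq1, hsq2]
      have hexp : Real.exp (-(8 * ((2:ℝ)^j)^2 * τ)) ≤ Real.exp (-τ * (‖ξ - η‖^2 + ‖η‖^2)) := by
        apply Real.exp_le_exp.2
        nlinarith [mul_le_mul_of_nonneg_left hS hτ]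
      have hf : (1:ℝ)/4 ≤ -((ξ 1 - η 1) * η 1) / (‖ξ - η‖ * ‖η‖) := by
        rw [le_div_iff₀ hden_pos]
        have hnum : ((2:ℝ)^j - 1) * ((2:ℝ)^j - 1) ≤ -((ξ 1 - η 1) * η 1) := by nlinarith
        have hden : ‖ξ - η‖ * ‖η‖ ≤ ((2:ℝ)^j + 2) * ((2:ℝ)^j + 2) :=
          mul_le_mul hub1 hub2 (norm_nonneg _) (by linarith)
        nlinarith [hnum, hden, hj]
      rw [hchiP, hchiM, mul_one, mul_one]
      exact mul_le_mul hexp hf (by norm_num) (Real.exp_pos _).le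
    · rw [Set.indicator_of_notMem hmem]
      exact G_nonneg ξ j hτ η
  calc Real.exp (-(8 * ((2:ℝ)^j)^2 * τ)) * (1/4)
      = ∫ η : R3, (Bbox ξ j).indicator (fun _ => Real.exp (-(8 * ((2:ℝ)^j)^2 * τ)) * (1/4)) η := by
        rw [integral_indicator_const _ (by rw [Bbox]; exact measurableSet_box _ _)]
        rw [measureReal_def, volume_Bbox]
        simp
    _ ≤ _ := integral_mono (by rw [Bbox]; exact integrable_ind_box _ _ _) (integrable_G ξ j hτ) hle

lemma integral_exp_neg_Ioc (k t : ℝ) (hk : 0 < k) (ht : 0 ≤ t) :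
    ∫ τ in Set.Ioc (0:ℝ) t, Real.exp (-(k * τ)) = (1 - Real.exp (-(k * t))) / k := by
  rw [← intervalIntegral.integral_of_le ht]
  have hderiv : ∀ x ∈ Set.uIcc (0:ℝ) t,
      HasDerivAt (fun y => -(Real.exp (-(k * y)) / k)) (Real.exp (-(k * x))) x := by
    intro x _
    have h1 : HasDerivAt (fun y : ℝ => -(k * y)) (-k) x := by
      simpa using (hasDerivAt_neg x).const_mul k
    have h3 : HasDerivAt (fun y => -(Real.exp (-(k * y)) / k)) (-(Real.exp (-(k * x)) * -k / k)) x :=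
      (h1.exp.div_const k).neg
    convert h3 using 1
    rw [mul_neg, neg_div, neg_neg, mul_div_cancel_right₀ _ hk.ne']
  rw [intervalIntegral.integral_eq_sub_of_hasDerivAt hderiv
    (Continuous.intervalIntegrable (by fun_prop) 0 t)]
  field_simp
  rw [mul_zero, neg_zero, Real.exp_zero]
  ring

lemma F_measurable (ξ : R3) (j : ℕ) :
    StronglyMeasurable (fun τ : ℝ => ∫ η : R3,
      Real.exp (-τ * (‖ξ - η‖ ^ 2 + ‖η‖ ^ 2)) *
        (-((ξ 1 - η 1) * η 1) / (‖ξ - η‖ * ‖η‖)) * chiP j (ξ - η) * chiM j η) :=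
  (G_measurable ξ j).integral_prod_right'

lemma volume_SMbox (j : ℕ) : (volume (SMbox j)).toReal = 8 := by
  rw [SMbox, volume_box, Fin.prod_univ_three]
  simp only [Matrix.cons_val_zero, Matrix.cons_val_one, Matrix.head_cons,
    Matrix.cons_val_two, Matrix.tail_cons]
  rw [show ((1:ℝ) - -1) = 2 by norm_num]
  rw [show (-((2:ℝ)^j)+1 - (-(2^j)-1)) = 2 by ring]
  rw [← ENNReal.ofReal_mul (by norm_num), ← ENNReal.ofReal_mul (by norm_num)]
  norm_num

lemma F_abs_le (ξ : R3) (j : ℕ) {τ : ℝ} (hτ : 0 ≤ τ) :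
    |∫ η : R3, Real.exp (-τ * (‖ξ - η‖ ^ 2 + ‖η‖ ^ 2)) *
        (-((ξ 1 - η 1) * η 1) / (‖ξ - η‖ * ‖η‖)) * chiP j (ξ - η) * chiM j η| ≤ 8 := by
  rw [← Real.norm_eq_abs]
  refine le_trans (norm_integral_le_integral_norm _) ?_
  have h2 : ∫ η : R3, ‖Real.exp (-τ * (‖ξ - η‖ ^ 2 + ‖η‖ ^ 2)) *
        (-((ξ 1 - η 1) * η 1) / (‖ξ - η‖ * ‖η‖)) * chiP j (ξ - η) * chiM j η‖ ≤
      ∫ η : R3, (SMbox j).indicator (fun _ => (1:ℝ)) η := by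
    refine integral_mono (integrable_G ξ j hτ).norm
      (by rw [SMbox]; exact integrable_ind_box _ _ 1) (fun η => ?_)
    rw [Real.norm_eq_abs]
    exact G_abs_le ξ j hτ η
  refine le_trans h2 ?_
  rw [integral_indicator_const _ (by rw [SMbox]; exact measurableSet_box _ _), measureReal_def, volume_SMbox]
  norm_num

lemma H_integrableOn (ξ : R3) (j : ℕ) (t : ℝ) :
    IntegrableOn (fun τ => Real.exp (-(t - τ) * ‖ξ‖ ^ 2) * ∫ η : R3,
      Real.exp (-τ * (‖ξ - η‖ ^ 2 + ‖η‖ ^ 2)) *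
        (-((ξ 1 - η 1) * η 1) / (‖ξ - η‖ * ‖η‖)) * chiP j (ξ - η) * chiM j η)
      (Set.Ioc 0 t) := by
  apply Measure.integrableOn_of_bounded (M := 8) measure_Ioc_lt_top.ne
  · exact ((Continuous.aestronglyMeasurable (by fun_prop)).mul
      (F_measurable ξ j).aestronglyMeasurable)
  · rw [ae_restrict_iff' measurableSet_Ioc]
    refine Filter.Eventually.of_forall fun τ hτ => ?_
    rw [Real.norm_eq_abs, abs_mul]
    have he : |Real.exp (-(t - τ) * ‖ξ‖ ^ 2)| ≤ 1 := by
      rw [abs_of_pos (Real.exp_pos _)]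
      apply Real.exp_le_one_iff.2
      have h1 : 0 ≤ t - τ := by linarith [hτ.2]
      nlinarith [sq_nonneg ‖ξ‖]
    calc |Real.exp (-(t - τ) * ‖ξ‖ ^ 2)| * |_| ≤ 1 * 8 :=
          mul_le_mul he (F_abs_le ξ j hτ.1.le) (abs_nonneg _) zero_le_one
      _ = 8 := by norm_num

lemma term_lower (ξ : R3) (hξnorm : ‖ξ‖ ≤ 1) (hξ : ∀ i, |ξ i| ≤ 1) (N j : ℕ)
    (h3 : 2 ≤ N) (hjN : N ≤ j) :
    Real.exp (-1) * (1 - Real.exp (-8)) / 32 ≤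
      (2:ℝ) ^ (2 * j) * ∫ τ in Set.Ioc (0:ℝ) ((2:ℝ) ^ (-(2 * N : ℤ))),
        Real.exp (-((2:ℝ) ^ (-(2 * N : ℤ)) - τ) * ‖ξ‖ ^ 2) *
          ∫ η : R3, Real.exp (-τ * (‖ξ - η‖ ^ 2 + ‖η‖ ^ 2)) *
            (-((ξ 1 - η 1) * η 1) / (‖ξ - η‖ * ‖η‖)) * chiP j (ξ - η) * chiM j η := by
  set t : ℝ := (2:ℝ) ^ (-(2 * N : ℤ)) with htdef
  have htval : t = ((2:ℝ)^(2*N))⁻¹ := by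
    rw [htdef, show (-(2*N:ℤ)) = -((2*N : ℕ) : ℤ) by push_cast; ring, zpow_neg, zpow_natCast]
  have ht0 : 0 < t := by rw [htval]; positivity
  have ht1 : t ≤ 1 := by
    rw [htval]
    exact inv_le_one_of_one_le₀ (one_le_pow₀ one_le_two)
  have hj4 : (4:ℝ) ≤ 2^j := by
    calc (4:ℝ) = 2^2 := by norm_num
    _ ≤ 2^j := pow_le_pow_right₀ one_le_two (by omega)
  have hk : (0:ℝ) < 8 * ((2:ℝ)^j)^2 := by positivity
  have hsq : ((2:ℝ)^j)^2 = 2^(2*j) := by rw [← pow_mul, Nat.mul_comm]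
  have hkt : 8 ≤ 8 * ((2:ℝ)^j)^2 * t := by
    have h1 : (2:ℝ)^(2*N) ≤ (2:ℝ)^(2*j) := pow_le_pow_right₀ one_le_two (by omega)
    have h3' : (1:ℝ) ≤ 2^(2*j) * t := by
      rw [htval, ← div_eq_mul_inv, le_div_iff₀ (by positivity)]
      linarith
    nlinarith [h3']
  have hmain : ∀ τ ∈ Set.Ioc (0:ℝ) t,
      Real.exp (-1) * (1/4) * Real.exp (-(8 * ((2:ℝ)^j)^2 * τ)) ≤
        Real.exp (-(t - τ) * ‖ξ‖ ^ 2) *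
          ∫ η : R3, Real.exp (-τ * (‖ξ - η‖ ^ 2 + ‖η‖ ^ 2)) *
            (-((ξ 1 - η 1) * η 1) / (‖ξ - η‖ * ‖η‖)) * chiP j (ξ - η) * chiM j η := by
    intro τ hτ
    have hb : ‖ξ‖^2 ≤ 1 := by nlinarith [norm_nonneg ξ]
    have h0 : 0 ≤ t - τ := by linarith [hτ.2]
    have h1 : Real.exp (-1) ≤ Real.exp (-(t - τ) * ‖ξ‖ ^ 2) := by
      apply Real.exp_le_exp.2
      nlinarith [mul_nonneg h0 (by linarith : (0:ℝ) ≤ 1 - ‖ξ‖^2), hτ.1, ht1, sq_nonneg ‖ξ‖]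
    have h2 := eta_lower ξ hξ j hj4 hτ.1.le (τ := τ)
    calc Real.exp (-1) * (1/4) * Real.exp (-(8 * ((2:ℝ)^j)^2 * τ))
        = Real.exp (-1) * (Real.exp (-(8 * ((2:ℝ)^j)^2 * τ)) * (1/4)) := by ring
      _ ≤ _ := mul_le_mul h1 h2 (by positivity) (Real.exp_pos _).le
  have hlowint : IntegrableOn
      (fun τ : ℝ => Real.exp (-1) * (1/4) * Real.exp (-(8 * ((2:ℝ)^j)^2 * τ)))
      (Set.Ioc 0 t) :=
    ((Continuous.integrableOn_Icc (by fun_prop)).mono_set Set.Ioc_subset_Icc_self)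
  have hint := setIntegral_mono_on hlowint (H_integrableOn ξ j t) measurableSet_Ioc hmain
  rw [show (fun τ : ℝ => Real.exp (-1) * (1/4) * Real.exp (-(8 * ((2:ℝ)^j)^2 * τ)))
      = fun τ : ℝ => (Real.exp (-1) * (1/4)) * Real.exp (-(8 * ((2:ℝ)^j)^2 * τ)) by rfl,
    integral_const_mul, integral_exp_neg_Ioc _ t hk ht0.le] at hint
  have hexp8 : Real.exp (-(8 * ((2:ℝ)^j)^2 * t)) ≤ Real.exp (-8) :=
    Real.exp_le_exp.2 (by linarith)
  have heq : (2:ℝ)^(2*j) * (Real.exp (-1) * (1/4) *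
      ((1 - Real.exp (-(8 * ((2:ℝ)^j)^2 * t))) / (8 * ((2:ℝ)^j)^2))) =
      Real.exp (-1) * (1 - Real.exp (-(8 * ((2:ℝ)^j)^2 * t))) / 32 := by
    rw [← hsq]
    field_simp
    ring
  calc Real.exp (-1) * (1 - Real.exp (-8)) / 32
      ≤ Real.exp (-1) * (1 - Real.exp (-(8 * ((2:ℝ)^j)^2 * t))) / 32 := by
        have := Real.exp_pos (-1:ℝ)
        nlinarith [hexp8]
    _ = (2:ℝ)^(2*j) * (Real.exp (-1) * (1/4) *
        ((1 - Real.exp (-(8 * ((2:ℝ)^j)^2 * t))) / (8 * ((2:ℝ)^j)^2))) := heq.symm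
    _ ≤ _ := mul_le_mul_of_nonneg_left hint (by positivity)

/-- **key lower bound for the second Picard iterate, estimate for J₁.**
There are c > 0 and N₀ ∈ ℕ such that for every integer N ≥ N₀, every δ > 0, with t := 2^{−2N},
for every ξ ∈ E:
(2δ²/N)(1 − ξ₁²/|ξ|²) ξ₁ ∑_{j=N}^{⌊3N/2⌋+1} 2^{2j} ∫₀^t e^{−(t−τ)|ξ|²}
∫ e^{−τ(|ξ−η|²+|η|²)} (−(ξ₂−η₂)η₂/(|ξ−η||η|)) χ_j^+(ξ−η) χ_j^−(η) dη dτ ≥ cδ². -/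
theorem second_iterate_lower_bound :
    ∃ c : ℝ, 0 < c ∧ ∃ N₀ : ℕ, ∀ N : ℕ, N₀ ≤ N → ∀ δ : ℝ, 0 < δ → ∀ ξ ∈ Eset,
      c * δ ^ 2 ≤
        2 * δ ^ 2 / N * (1 - (ξ 0) ^ 2 / ‖ξ‖ ^ 2) * ξ 0 *
          ∑ j ∈ Finset.Icc N (3 * N / 2 + 1), (2 : ℝ) ^ (2 * j) *
            ∫ τ in Set.Ioc (0 : ℝ) ((2 : ℝ) ^ (-(2 * N : ℤ))),
              Real.exp (-((2 : ℝ) ^ (-(2 * N : ℤ)) - τ) * ‖ξ‖ ^ 2) *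
                ∫ η : R3, Real.exp (-τ * (‖ξ - η‖ ^ 2 + ‖η‖ ^ 2)) *
                  (-((ξ 1 - η 1) * η 1) / (‖ξ - η‖ * ‖η‖)) * chiP j (ξ - η) * chiM j η := by
  have h8 : Real.exp (-8) < 1 := by rw [Real.exp_lt_one_iff]; norm_num
  have hc₀ : 0 < Real.exp (-1) * (1 - Real.exp (-8)) / 32 := by
    have h9 : 0 < 1 - Real.exp (-8) := by linarith
    positivity
  refine ⟨21/250 * (Real.exp (-1) * (1 - Real.exp (-8)) / 32), by positivity, 2, ?_⟩
  intro N hN δ hδ ξ hξE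
  obtain ⟨hξ1, hξ2, hξ3, hξ4⟩ := hξE
  have hcoords : ∀ i, |ξ i| ≤ 1 := fun i => le_trans (abs_coord_le ξ i) hξ4
  have hsum := Finset.card_nsmul_le_sum (Finset.Icc N (3 * N / 2 + 1))
    (fun j => (2 : ℝ) ^ (2 * j) *
      ∫ τ in Set.Ioc (0 : ℝ) ((2 : ℝ) ^ (-(2 * N : ℤ))),
        Real.exp (-((2 : ℝ) ^ (-(2 * N : ℤ)) - τ) * ‖ξ‖ ^ 2) *
          ∫ η : R3, Real.exp (-τ * (‖ξ - η‖ ^ 2 + ‖η‖ ^ 2)) *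
            (-((ξ 1 - η 1) * η 1) / (‖ξ - η‖ * ‖η‖)) * chiP j (ξ - η) * chiM j η)
    (Real.exp (-1) * (1 - Real.exp (-8)) / 32)
    (fun j hj => term_lower ξ hξ4 hcoords N j hN (Finset.mem_Icc.1 hj).1)
  rw [nsmul_eq_mul] at hsum
  have hcard : (N:ℝ)/2 ≤ ((Finset.Icc N (3 * N / 2 + 1)).card : ℝ) := by
    have h : N ≤ 2 * (Finset.Icc N (3 * N / 2 + 1)).card := by rw [Nat.card_Icc]; omega
    have h' := (Nat.cast_le (α := ℝ)).2 h
    push_cast at h'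
    linarith
  have hSig : (N:ℝ)/2 * (Real.exp (-1) * (1 - Real.exp (-8)) / 32) ≤
      ∑ j ∈ Finset.Icc N (3 * N / 2 + 1), (2 : ℝ) ^ (2 * j) *
        ∫ τ in Set.Ioc (0 : ℝ) ((2 : ℝ) ^ (-(2 * N : ℤ))),
          Real.exp (-((2 : ℝ) ^ (-(2 * N : ℤ)) - τ) * ‖ξ‖ ^ 2) *
            ∫ η : R3, Real.exp (-τ * (‖ξ - η‖ ^ 2 + ‖η‖ ^ 2)) *
              (-((ξ 1 - η 1) * η 1) / (‖ξ - η‖ * ‖η‖)) * chiP j (ξ - η) * chiM j η :=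
    le_trans (mul_le_mul_of_nonneg_right hcard hc₀.le) hsum
  have hA : (21:ℝ)/25 ≤ 1 - ξ 0 ^ 2 / ‖ξ‖ ^ 2 := by
    have h1 : ξ 0 ^ 2 ≤ 1/25 := by nlinarith
    have h2 : (1:ℝ)/4 ≤ ‖ξ‖ ^ 2 := by nlinarith
    have h3 : ξ 0 ^ 2 / ‖ξ‖ ^ 2 ≤ (1/25)/((1:ℝ)/4) :=
      div_le_div₀ (by norm_num) h1 (by norm_num) h2
    norm_num at h3
    linarith
  have hD : 0 ≤ 2 * δ ^ 2 / (N:ℝ) := by positivity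
  have hNpos : (0:ℝ) < N := by
    have : (0:ℕ) < N := by omega
    exact_mod_cast this
  have hA0 : 0 ≤ 1 - ξ 0 ^ 2 / ‖ξ‖ ^ 2 := le_trans (by norm_num) hA
  have hξ00 : 0 ≤ ξ 0 := le_trans (by norm_num) hξ1
  have s1 : 2 * δ ^ 2 / (N:ℝ) * (21/25) ≤ 2 * δ ^ 2 / N * (1 - ξ 0 ^ 2 / ‖ξ‖ ^ 2) :=
    mul_le_mul_of_nonneg_left hA hD
  have s2 : 2 * δ ^ 2 / (N:ℝ) * (21/25) * (1/10) ≤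
      2 * δ ^ 2 / N * (1 - ξ 0 ^ 2 / ‖ξ‖ ^ 2) * ξ 0 :=
    mul_le_mul s1 hξ1 (by norm_num) (mul_nonneg hD hA0)
  have s3 := mul_le_mul s2 hSig
    (mul_nonneg (by positivity) hc₀.le)
    (mul_nonneg (mul_nonneg hD hA0) hξ00)
  refine le_trans (le_of_eq ?_) s3
  have hN0 : (N:ℝ) ≠ 0 := ne_of_gt hNpos
  field_simp
  ring
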